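/- Let r ≥ m(m−1)/2 and let W = ℝ^r. Let H ⊆ W ⊗ S²(ℝ^m) be the open set of W-valued symmetric bilinear forms h = (h_{ij}) such that the vectors {h_{ij} : 1 ≤ i ≤ j ≤ m−1} are linearly independent in W. Then the Gauss map γ: H → K_m defined by γ(h)_{ijkl} = ⟨h_{ik}, h_{jl}⟩ − ⟨h_{il}, h_{jk}⟩ is a surjective submersion onto the space K_m of algebraic curvature tensors. -/

import Mathlib

noncomputable section

open RealInnerProductSpace

namespace GaussLA

variable {n r : ℕ}

abbrev QQ (n : ℕ) := {q : Fin n × Fin n // q.1 ≤ q.2}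

variable (R : Fin (n+1) → Fin (n+1) → Fin (n+1) → Fin (n+1) → ℝ)
  (w : QQ n → EuclideanSpace ℝ (Fin r))
  (h : Fin (n+1) → Fin (n+1) → EuclideanSpace ℝ (Fin r))

/-- small-small coefficients -/
def Tss (a c q1 q2 : Fin n) : ℝ :=
  (1/6) * (R a.castSucc q1.castSucc c.castSucc q2.castSucc
         + R a.castSucc q2.castSucc c.castSucc q1.castSucc)

def bet (p : QQ n) (b : Fin n) : ℝ := ⟪w p, h b.castSucc (Fin.last n)⟫

def bet' (p : QQ n) : ℝ := ⟪w p, h (Fin.last n) (Fin.last n)⟫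

def Tsm (b q1 q2 : Fin n) : ℝ :=
  (1/3) * (R q1.castSucc b.castSucc q2.castSucc (Fin.last n)
         + R q2.castSucc b.castSucc q1.castSucc (Fin.last n))
  - ∑ p : QQ n, Tss R q1 q2 p.1.1 p.1.2 * bet w h p b

def Tmm (q1 q2 : Fin n) : ℝ :=
  R q1.castSucc (Fin.last n) q2.castSucc (Fin.last n)
  - (∑ p : QQ n, Tss R q1 q2 p.1.1 p.1.2 * bet' w h p)
  + (∑ p : QQ n, Tsm R w h q1 p.1.1 p.1.2 * bet w h p q2)
  + (∑ p : QQ n, Tsm R w h q2 p.1.1 p.1.2 * bet w h p q1)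

def TT (i j : Fin (n+1)) (a b : Fin n) : ℝ :=
  Fin.lastCases (Fin.lastCases (Tmm R w h a b) (fun jj => Tsm R w h jj a b) j)
    (fun ii => Fin.lastCases (Tsm R w h ii a b) (fun jj => Tss R ii jj a b) j) i

@[simp] lemma TT_ss (a c : Fin n) (q1 q2 : Fin n) :
    TT R w h a.castSucc c.castSucc q1 q2 = Tss R a c q1 q2 := by
  simp [TT]

@[simp] lemma TT_sm (a : Fin n) (q1 q2 : Fin n) :
    TT R w h a.castSucc (Fin.last n) q1 q2 = Tsm R w h a q1 q2 := by
  simp [TT]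

@[simp] lemma TT_ms (b : Fin n) (q1 q2 : Fin n) :
    TT R w h (Fin.last n) b.castSucc q1 q2 = Tsm R w h b q1 q2 := by
  simp [TT]

@[simp] lemma TT_mm (q1 q2 : Fin n) :
    TT R w h (Fin.last n) (Fin.last n) q1 q2 = Tmm R w h q1 q2 := by
  simp [TT]

def vv (i j : Fin (n+1)) : EuclideanSpace ℝ (Fin r) :=
  ∑ p : QQ n, TT R w h i j p.1.1 p.1.2 • w p

lemma inner_vv (i j : Fin (n+1)) (y : EuclideanSpace ℝ (Fin r)) :
    ⟪vv R w h i j, y⟫ = ∑ p : QQ n, TT R w h i j p.1.1 p.1.2 * ⟪w p, y⟫ := by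
  simp [vv, sum_inner, inner_smul_left]

end GaussLA
end


noncomputable section
namespace GaussLA
open Finset RealInnerProductSpace

variable {n r : ℕ}
variable {R : Fin (n+1) → Fin (n+1) → Fin (n+1) → Fin (n+1) → ℝ}
  {w : QQ n → EuclideanSpace ℝ (Fin r)}
  {h : Fin (n+1) → Fin (n+1) → EuclideanSpace ℝ (Fin r)}

lemma Tss_symm2 (a c q1 q2 : Fin n) : Tss R a c q1 q2 = Tss R a c q2 q1 := by
  simp [Tss]; ring

lemma Tss_symm1 (hR1 : ∀ i j k l, R i j k l = R k l i j) (a c q1 q2 : Fin n) :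
    Tss R a c q1 q2 = Tss R c a q1 q2 := by
  simp only [Tss]
  have := hR1 c.castSucc q1.castSucc a.castSucc q2.castSucc
  have := hR1 c.castSucc q2.castSucc a.castSucc q1.castSucc
  linarith

lemma Tsm_symm2 (hR1 : ∀ i j k l, R i j k l = R k l i j) (b q1 q2 : Fin n) :
    Tsm R w h b q1 q2 = Tsm R w h b q2 q1 := by
  simp only [Tsm]
  rw [show (∑ p : QQ n, Tss R q2 q1 p.1.1 p.1.2 * bet w h p b)
      = ∑ p : QQ n, Tss R q1 q2 p.1.1 p.1.2 * bet w h p b from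
    Finset.sum_congr rfl (fun p _ => by rw [Tss_symm1 hR1])]
  ring

lemma Tmm_symm2 (hR1 : ∀ i j k l, R i j k l = R k l i j) (q1 q2 : Fin n) :
    Tmm R w h q1 q2 = Tmm R w h q2 q1 := by
  simp only [Tmm]
  rw [show (∑ p : QQ n, Tss R q2 q1 p.1.1 p.1.2 * bet' w h p)
      = ∑ p : QQ n, Tss R q1 q2 p.1.1 p.1.2 * bet' w h p from
    Finset.sum_congr rfl (fun p _ => by rw [Tss_symm1 hR1])]
  rw [hR1 q1.castSucc (Fin.last n) q2.castSucc (Fin.last n)]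
  ring

lemma TT_symm2 (hR1 : ∀ i j k l, R i j k l = R k l i j) (i j : Fin (n+1)) (a b : Fin n) :
    TT R w h i j a b = TT R w h i j b a := by
  induction i using Fin.lastCases with
  | last =>
    induction j using Fin.lastCases with
    | last => simp [Tmm_symm2 hR1]
    | cast jj => simp [Tsm_symm2 hR1]
  | cast ii =>
    induction j using Fin.lastCases with
    | last => simp [Tsm_symm2 hR1]
    | cast jj => simp [Tss_symm2]

lemma TT_symm1 (hR1 : ∀ i j k l, R i j k l = R k l i j) (i j : Fin (n+1)) (a b : Fin n) :
    TT R w h i j a b = TT R w h j i a b := by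
  induction i using Fin.lastCases with
  | last =>
    induction j using Fin.lastCases with
    | last => rfl
    | cast jj => simp
  | cast ii =>
    induction j using Fin.lastCases with
    | last => simp
    | cast jj => simp [Tss_symm1 hR1]

lemma vv_symm (hR1 : ∀ i j k l, R i j k l = R k l i j) (i j : Fin (n+1)) :
    vv R w h i j = vv R w h j i := by
  simp only [vv]
  exact Finset.sum_congr rfl (fun p _ => by rw [TT_symm1 hR1])

lemma key_le (hw : ∀ p q : QQ n, ⟪w p, h q.1.1.castSucc q.1.2.castSucc⟫ = if p = q then 1 else 0)
    (i j : Fin (n+1)) (a b : Fin n) (hab : a ≤ b) :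
    ⟪vv R w h i j, h a.castSucc b.castSucc⟫ = TT R w h i j a b := by
  classical
  rw [inner_vv]
  set q0 : QQ n := ⟨(a, b), hab⟩ with hq0
  have step : ∀ p : QQ n, TT R w h i j p.1.1 p.1.2 * ⟪w p, h a.castSucc b.castSucc⟫
      = if p = q0 then TT R w h i j a b else 0 := by
    intro p
    rw [show ⟪w p, h a.castSucc b.castSucc⟫ = if p = q0 then 1 else 0 from hw p q0]
    by_cases hp : p = q0
    · subst hp; simp [hq0]
    · simp [hp]
  rw [Finset.sum_congr rfl (fun p _ => step p), Finset.sum_ite_eq' Finset.univ q0]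
  simp

lemma key (hR1 : ∀ i j k l, R i j k l = R k l i j) (hsym : ∀ i j, h i j = h j i)
    (hw : ∀ p q : QQ n, ⟪w p, h q.1.1.castSucc q.1.2.castSucc⟫ = if p = q then 1 else 0)
    (i j : Fin (n+1)) (a b : Fin n) :
    ⟪vv R w h i j, h a.castSucc b.castSucc⟫ = TT R w h i j a b := by
  rcases le_total a b with hab | hba
  · exact key_le hw i j a b hab
  · rw [hsym, key_le hw i j b a hba, ← TT_symm2 hR1]

end GaussLA
end

noncomputable section
namespace GaussLA
open Finset RealInnerProductSpace

variable {n r : ℕ}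

section GamDefs
variable (R : Fin (n+1) → Fin (n+1) → Fin (n+1) → Fin (n+1) → ℝ)
  (w : QQ n → EuclideanSpace ℝ (Fin r))
  (h : Fin (n+1) → Fin (n+1) → EuclideanSpace ℝ (Fin r))

def Gam (i j k l : Fin (n+1)) : ℝ :=
  ⟪vv R w h i k, h j l⟫ + ⟪h i k, vv R w h j l⟫ - ⟪vv R w h i l, h j k⟫ - ⟪h i l, vv R w h j k⟫

lemma inner_vv_sm (i j : Fin (n+1)) (b : Fin n) :
    ⟪vv R w h i j, h b.castSucc (Fin.last n)⟫
      = ∑ p : QQ n, TT R w h i j p.1.1 p.1.2 * bet w h p b := by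
  rw [inner_vv]; rfl

lemma inner_vv_mm (i j : Fin (n+1)) :
    ⟪vv R w h i j, h (Fin.last n) (Fin.last n)⟫
      = ∑ p : QQ n, TT R w h i j p.1.1 p.1.2 * bet' w h p := by
  rw [inner_vv]; rfl

end GamDefs

variable {R : Fin (n+1) → Fin (n+1) → Fin (n+1) → Fin (n+1) → ℝ}
  {w : QQ n → EuclideanSpace ℝ (Fin r)}
  {h : Fin (n+1) → Fin (n+1) → EuclideanSpace ℝ (Fin r)}

lemma Gam_swap1 (i j k l : Fin (n+1)) : Gam R w h j i k l = - Gam R w h i j k l := by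
  unfold Gam
  rw [real_inner_comm (vv R w h j k) (h i l), real_inner_comm (h j k) (vv R w h i l),
    real_inner_comm (vv R w h j l) (h i k), real_inner_comm (h j l) (vv R w h i k)]
  ring

lemma Gam_pair (hR1 : ∀ i j k l, R i j k l = R k l i j) (hsym : ∀ i j, h i j = h j i)
    (i j k l : Fin (n+1)) : Gam R w h k l i j = Gam R w h i j k l := by
  unfold Gam
  rw [vv_symm hR1 k i, vv_symm hR1 l j, vv_symm hR1 k j, vv_symm hR1 l i,
    hsym k i, hsym l j, hsym k j, hsym l i,
    real_inner_comm (vv R w h j k) (h i l), real_inner_comm (h j k) (vv R w h i l)]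
  ring

lemma Gam_swap2 (hR1 : ∀ i j k l, R i j k l = R k l i j) (hsym : ∀ i j, h i j = h j i)
    (i j k l : Fin (n+1)) : Gam R w h i j l k = - Gam R w h i j k l := by
  rw [Gam_pair (w := w) hR1 hsym l k i j, Gam_swap1 k l i j, Gam_pair (w := w) hR1 hsym i j k l]

lemma Gam_diag12 (i k l : Fin (n+1)) : Gam R w h i i k l = 0 := by
  have := Gam_swap1 (R := R) (w := w) (h := h) i i k l; linarith

lemma Gam_diag34 (hR1 : ∀ i j k l, R i j k l = R k l i j) (hsym : ∀ i j, h i j = h j i)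
    (i j k : Fin (n+1)) : Gam R w h i j k k = 0 := by
  rw [← Gam_pair (w := w) hR1 hsym i j k k, Gam_diag12]

lemma master (hR1 : ∀ i j k l, R i j k l = R k l i j)
    (hR2 : ∀ i j k l, R i j k l = - R j i k l)
    (hR3 : ∀ i j k l, R i j k l + R k i j l + R j k i l = 0)
    (hsym : ∀ i j, h i j = h j i)
    (hw : ∀ p q : QQ n, ⟪w p, h q.1.1.castSucc q.1.2.castSucc⟫ = if p = q then 1 else 0)
    (i j k l : Fin (n+1)) : Gam R w h i j k l = R i j k l := by
  have hR4 : ∀ i j k l, R i j l k = - R i j k l := fun i j k l => by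
    rw [hR1 i j l k, hR2 l k i j, hR1 k l i j]
  have hflip : ∀ i j k l, R j i l k = R i j k l := fun i j k l => by
    rw [hR2 j i l k, hR4 i j k l]; ring
  have hRD1 : ∀ i k l, R i i k l = 0 := fun i k l => by have := hR2 i i k l; linarith
  have hRD2 : ∀ i j k, R i j k k = 0 := fun i j k => by have := hR4 i j k k; linarith
  -- Case A : all indices small
  have caseA : ∀ a b c d : Fin n,
      Gam R w h a.castSucc b.castSucc c.castSucc d.castSucc
        = R a.castSucc b.castSucc c.castSucc d.castSucc := by
    intro a b c d
    have e1 : ⟪vv R w h a.castSucc c.castSucc, h b.castSucc d.castSucc⟫ = Tss R a c b d := by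
      rw [key hR1 hsym hw a.castSucc c.castSucc b d, TT_ss]
    have e2 : ⟪h a.castSucc c.castSucc, vv R w h b.castSucc d.castSucc⟫ = Tss R b d a c := by
      rw [real_inner_comm, key hR1 hsym hw b.castSucc d.castSucc a c, TT_ss]
    have e3 : ⟪vv R w h a.castSucc d.castSucc, h b.castSucc c.castSucc⟫ = Tss R a d b c := by
      rw [key hR1 hsym hw a.castSucc d.castSucc b c, TT_ss]
    have e4 : ⟪h a.castSucc d.castSucc, vv R w h b.castSucc c.castSucc⟫ = Tss R b c a d := by
      rw [real_inner_comm, key hR1 hsym hw b.castSucc c.castSucc a d, TT_ss]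
    unfold Gam
    rw [e1, e2, e3, e4]
    simp only [Tss]
    have i1 := hflip a.castSucc b.castSucc c.castSucc d.castSucc
    have i2 := hR1 b.castSucc c.castSucc d.castSucc a.castSucc
    have i2b := hflip a.castSucc d.castSucc c.castSucc b.castSucc
    have i3 := hR4 a.castSucc b.castSucc c.castSucc d.castSucc
    have i4 := hR2 b.castSucc a.castSucc c.castSucc d.castSucc
    have i5 := hR1 b.castSucc d.castSucc c.castSucc a.castSucc
    have i5b := hflip a.castSucc c.castSucc d.castSucc b.castSucc
    have i6 := hR3 a.castSucc d.castSucc c.castSucc b.castSucc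
    have i7 := hR2 a.castSucc c.castSucc d.castSucc b.castSucc
    have i8 := hR1 d.castSucc c.castSucc a.castSucc b.castSucc
    linarith
  -- Case B : i j k small, l = last
  have caseB : ∀ a b c : Fin n,
      Gam R w h a.castSucc b.castSucc c.castSucc (Fin.last n)
        = R a.castSucc b.castSucc c.castSucc (Fin.last n) := by
    intro a b c
    have e1 : ⟪vv R w h a.castSucc c.castSucc, h b.castSucc (Fin.last n)⟫
        = ∑ p : QQ n, Tss R a c p.1.1 p.1.2 * bet w h p b := by
      rw [inner_vv_sm]
      exact Finset.sum_congr rfl fun p _ => by rw [TT_ss]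
    have e2 : ⟪h a.castSucc c.castSucc, vv R w h b.castSucc (Fin.last n)⟫ = Tsm R w h b a c := by
      rw [real_inner_comm, key hR1 hsym hw b.castSucc (Fin.last n) a c, TT_sm]
    have e3 : ⟪vv R w h a.castSucc (Fin.last n), h b.castSucc c.castSucc⟫ = Tsm R w h a b c := by
      rw [key hR1 hsym hw a.castSucc (Fin.last n) b c, TT_sm]
    have e4 : ⟪h a.castSucc (Fin.last n), vv R w h b.castSucc c.castSucc⟫
        = ∑ p : QQ n, Tss R b c p.1.1 p.1.2 * bet w h p a := by
      rw [real_inner_comm, inner_vv_sm]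
      exact Finset.sum_congr rfl fun p _ => by rw [TT_ss]
    unfold Gam
    rw [e1, e2, e3, e4]
    simp only [Tsm]
    have i1 := hR2 b.castSucc a.castSucc c.castSucc (Fin.last n)
    have i2 := hR2 c.castSucc b.castSucc a.castSucc (Fin.last n)
    have i3 := hR3 a.castSucc b.castSucc c.castSucc (Fin.last n)
    linarith
  -- Case C : i k small, j = l = last
  have caseC : ∀ a b : Fin n,
      Gam R w h a.castSucc (Fin.last n) b.castSucc (Fin.last n)
        = R a.castSucc (Fin.last n) b.castSucc (Fin.last n) := by
    intro a b
    have e1 : ⟪vv R w h a.castSucc b.castSucc, h (Fin.last n) (Fin.last n)⟫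
        = ∑ p : QQ n, Tss R a b p.1.1 p.1.2 * bet' w h p := by
      rw [inner_vv_mm]
      exact Finset.sum_congr rfl fun p _ => by rw [TT_ss]
    have e2 : ⟪h a.castSucc b.castSucc, vv R w h (Fin.last n) (Fin.last n)⟫ = Tmm R w h a b := by
      rw [real_inner_comm, key hR1 hsym hw (Fin.last n) (Fin.last n) a b, TT_mm]
    have e3 : ⟪vv R w h a.castSucc (Fin.last n), h (Fin.last n) b.castSucc⟫
        = ∑ p : QQ n, Tsm R w h a p.1.1 p.1.2 * bet w h p b := by
      rw [show h (Fin.last n) b.castSucc = h b.castSucc (Fin.last n) from hsym _ _, inner_vv_sm]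
      exact Finset.sum_congr rfl fun p _ => by rw [TT_sm]
    have e4 : ⟪h a.castSucc (Fin.last n), vv R w h (Fin.last n) b.castSucc⟫
        = ∑ p : QQ n, Tsm R w h b p.1.1 p.1.2 * bet w h p a := by
      rw [real_inner_comm, inner_vv_sm]
      exact Finset.sum_congr rfl fun p _ => by rw [TT_ms]
    unfold Gam
    rw [e1, e2, e3, e4]
    simp only [Tmm]
    ring
  induction i using Fin.lastCases with
  | cast a =>
    induction j using Fin.lastCases with
    | cast b =>
      induction k using Fin.lastCases with
      | cast c =>
        induction l using Fin.lastCases with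
        | cast d => exact caseA a b c d
        | last => exact caseB a b c
      | last =>
        induction l using Fin.lastCases with
        | cast d =>
          have F1 := Gam_swap2 (w := w) hR1 hsym a.castSucc b.castSucc d.castSucc (Fin.last n)
          have F2 := caseB a b d
          have F3 := hR4 a.castSucc b.castSucc d.castSucc (Fin.last n)
          linarith
        | last =>
          rw [Gam_diag34 (w := w) hR1 hsym, hRD2]
    | last =>
      induction k using Fin.lastCases with
      | cast c =>
        induction l using Fin.lastCases with
        | cast d =>
          have F1 := Gam_pair (w := w) hR1 hsym c.castSucc d.castSucc a.castSucc (Fin.last n)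
          have F2 := caseB c d a
          have F3 := hR1 a.castSucc (Fin.last n) c.castSucc d.castSucc
          linarith
        | last => exact caseC a c
      | last =>
        induction l using Fin.lastCases with
        | cast d =>
          have F1 := Gam_swap2 (w := w) hR1 hsym a.castSucc (Fin.last n) d.castSucc (Fin.last n)
          have F2 := caseC a d
          have F3 := hR4 a.castSucc (Fin.last n) d.castSucc (Fin.last n)
          linarith
        | last => rw [Gam_diag34 (w := w) hR1 hsym, hRD2]
  | last =>
    induction j using Fin.lastCases with
    | cast b =>
      induction k using Fin.lastCases with
      | cast c =>
        induction l using Fin.lastCases with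
        | cast d =>
          have F1 := Gam_swap1 (R := R) (w := w) (h := h) b.castSucc (Fin.last n) c.castSucc d.castSucc
          have F2 := Gam_pair (w := w) hR1 hsym c.castSucc d.castSucc b.castSucc (Fin.last n)
          have F3 := caseB c d b
          have F4 := hR2 (Fin.last n) b.castSucc c.castSucc d.castSucc
          have F5 := hR1 b.castSucc (Fin.last n) c.castSucc d.castSucc
          linarith
        | last =>
          have F1 := Gam_swap1 (R := R) (w := w) (h := h) b.castSucc (Fin.last n) c.castSucc (Fin.last n)
          have F2 := caseC b c
          have F3 := hR2 (Fin.last n) b.castSucc c.castSucc (Fin.last n)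
          linarith
      | last =>
        induction l using Fin.lastCases with
        | cast d =>
          have F1 := Gam_swap1 (R := R) (w := w) (h := h) b.castSucc (Fin.last n) (Fin.last n) d.castSucc
          have F2 := Gam_swap2 (w := w) hR1 hsym b.castSucc (Fin.last n) d.castSucc (Fin.last n)
          have F3 := caseC b d
          have F4 := hR2 (Fin.last n) b.castSucc (Fin.last n) d.castSucc
          have F5 := hR4 b.castSucc (Fin.last n) d.castSucc (Fin.last n)
          linarith
        | last => rw [Gam_diag34 (w := w) hR1 hsym, hRD2]
    | last => rw [Gam_diag12, hRD1]

end GaussLA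
end

noncomputable section
namespace GaussLA
open Finset RealInnerProductSpace

lemma dual_family {r : ℕ} {ι : Type*} [Fintype ι] [DecidableEq ι]
    (f : ι → EuclideanSpace ℝ (Fin r)) (hf : LinearIndependent ℝ f) :
    ∃ w : ι → EuclideanSpace ℝ (Fin r),
      ∀ p q, (inner ℝ (w p) (f q) : ℝ) = if p = q then 1 else 0 := by
  classical
  have H : ∀ p : ι, ∃ wp : EuclideanSpace ℝ (Fin r),
      ∀ q, (inner ℝ wp (f q) : ℝ) = if p = q then 1 else 0 := by
    intro p
    set U : Submodule ℝ (EuclideanSpace ℝ (Fin r)) := Submodule.span ℝ (f '' {p}ᶜ) with hU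
    have hfp : f p ∉ U := hf.notMem_span_image (by simp)
    set w' : EuclideanSpace ℝ (Fin r) :=
      f p - (U.orthogonalProjection (f p) : EuclideanSpace ℝ (Fin r)) with hw'
    have hw'mem : w' ∈ Uᗮ := U.sub_starProjection_mem_orthogonal (f p)
    have hw'ne : w' ≠ 0 := by
      intro h0
      apply hfp
      have h1 : f p = (U.orthogonalProjection (f p) : EuclideanSpace ℝ (Fin r)) :=
        sub_eq_zero.mp h0
      rw [h1]; exact (U.orthogonalProjection (f p)).2
    have hip : (inner ℝ w' (f p) : ℝ) = ‖w'‖^2 := by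
      have h1 : f p = w' + (U.orthogonalProjection (f p) : EuclideanSpace ℝ (Fin r)) := by
        rw [hw']; abel
      rw [h1, inner_add_right]
      have h2 : (inner ℝ w' ((U.orthogonalProjection (f p) : EuclideanSpace ℝ (Fin r))) : ℝ) = 0 :=
        (Submodule.mem_orthogonal' U w').mp hw'mem _ (U.orthogonalProjection (f p)).2
      rw [h2, real_inner_self_eq_norm_sq]; ring
    have hne : ‖w'‖ ≠ 0 := norm_ne_zero_iff.mpr hw'ne
    have hpos : (0:ℝ) < ‖w'‖^2 := by positivity
    refine ⟨(‖w'‖^2)⁻¹ • w', ?_⟩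
    intro q
    by_cases hq : p = q
    · subst hq
      rw [inner_smul_left]; simp [hip]
      field_simp
    · have hmem : f q ∈ U := Submodule.subset_span ⟨q, by simp [Ne.symm hq], rfl⟩
      rw [inner_smul_left]
      have h0 : (inner ℝ w' (f q) : ℝ) = 0 := (Submodule.mem_orthogonal' U w').mp hw'mem _ hmem
      simp [h0, hq]
  choose w hw using H
  exact ⟨w, hw⟩

lemma mainLA {n r : ℕ} {R : Fin (n+1) → Fin (n+1) → Fin (n+1) → Fin (n+1) → ℝ}
    (hR1 : ∀ i j k l, R i j k l = R k l i j)
    (hR2 : ∀ i j k l, R i j k l = - R j i k l)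
    (hR3 : ∀ i j k l, R i j k l + R k i j l + R j k i l = 0)
    {h : Fin (n+1) → Fin (n+1) → EuclideanSpace ℝ (Fin r)}
    (hsym : ∀ i j, h i j = h j i)
    (hind : LinearIndependent ℝ (fun q : QQ n => h q.1.1.castSucc q.1.2.castSucc)) :
    ∃ v : Fin (n+1) → Fin (n+1) → EuclideanSpace ℝ (Fin r),
      (∀ i j, v i j = v j i) ∧
      ∀ i j k l, ⟪v i k, h j l⟫ + ⟪h i k, v j l⟫ - ⟪v i l, h j k⟫ - ⟪h i l, v j k⟫
        = R i j k l := by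
  classical
  obtain ⟨w, hw⟩ := dual_family _ hind
  exact ⟨vv R w h, fun i j => vv_symm hR1 i j,
    fun i j k l => master hR1 hR2 hR3 hsym hw i j k l⟩

end GaussLA
end


noncomputable section
namespace GaussAn
open RealInnerProductSpace Asymptotics

variable {m r : ℕ}

abbrev Amb (m r : ℕ) := Fin m → Fin m → EuclideanSpace ℝ (Fin r)
abbrev Tt (m : ℕ) := Fin m → Fin m → Fin m → Fin m → ℝ

/-- the Gauss quadratic map -/
def gam (h : Amb m r) : Tt m := fun i j k l => ⟪h i k, h j l⟫ - ⟪h i l, h j k⟫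

/-- bilinear version -/
def bmap (g h : Amb m r) : Tt m := fun i j k l => ⟪g i k, h j l⟫ - ⟪g i l, h j k⟫

def B2 : Amb m r →ₗ[ℝ] Amb m r →ₗ[ℝ] Tt m :=
  LinearMap.mk₂ ℝ bmap
    (fun g g' h => by funext i j k l; simp [bmap, inner_add_left]; ring)
    (fun c g h => by funext i j k l; simp [bmap, inner_smul_left]; ring)
    (fun g h h' => by funext i j k l; simp [bmap, inner_add_right]; ring)
    (fun c g h => by funext i j k l; simp [bmap, inner_smul_right]; ring)

def Bc : Amb m r →L[ℝ] Amb m r →L[ℝ] Tt m :=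
  LinearMap.toContinuousLinearMap
    ((LinearMap.toContinuousLinearMap : (Amb m r →ₗ[ℝ] Tt m) ≃ₗ[ℝ] _).toLinearMap.comp B2)

@[simp] lemma Bc_apply (g h : Amb m r) : Bc g h = bmap g h := by
  simp [Bc, B2]

/-- derivative of `gam` at `x` -/
def Dc (x : Amb m r) : Amb m r →L[ℝ] Tt m := Bc x + (Bc.flip) x

lemma Dc_apply (x v : Amb m r) (i j k l : Fin m) :
    Dc x v i j k l = (⟪x i k, v j l⟫ - ⟪x i l, v j k⟫) + (⟪v i k, x j l⟫ - ⟪v i l, x j k⟫) := by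
  have : Dc x v = bmap x v + bmap v x := by
    simp [Dc]
  rw [this]
  rfl

lemma hasD (x : Amb m r) : HasStrictFDerivAt (gam (r := r)) (Dc x) x := by
  have hb : IsBoundedBilinearMap ℝ (fun p : Amb m r × Amb m r => Bc p.1 p.2) :=
    Bc.isBoundedBilinearMap
  have hd : HasStrictFDerivAt (fun y : Amb m r => (y, y))
      ((ContinuousLinearMap.id ℝ (Amb m r)).prod (ContinuousLinearMap.id ℝ (Amb m r))) x :=
    HasStrictFDerivAt.prodMk (hasStrictFDerivAt_id x) (hasStrictFDerivAt_id x)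
  have H : HasStrictFDerivAt (fun y : Amb m r => Bc y y)
      ((hb.deriv (x, x)).comp
        ((ContinuousLinearMap.id ℝ (Amb m r)).prod (ContinuousLinearMap.id ℝ (Amb m r)))) x :=
    HasStrictFDerivAt.comp (f := fun y : Amb m r => (y, y)) x (hb.hasStrictFDerivAt (x, x)) hd
  have hfun : (fun y : Amb m r => Bc y y) = gam (r := r) := by
    funext y; rw [Bc_apply]; rfl
  have hder : (hb.deriv (x, x)).comp
      ((ContinuousLinearMap.id ℝ (Amb m r)).prod (ContinuousLinearMap.id ℝ (Amb m r))) = Dc x := by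
    ext v i j k l
    simp [IsBoundedBilinearMap.deriv_apply, Dc]
  rw [← hfun, ← hder]
  exact H

lemma fderiv_gam (x : Amb m r) : fderiv ℝ (gam (r := r)) x = Dc x :=
  (hasD x).hasFDerivAt.fderiv

end GaussAn
end

noncomputable section
namespace GaussAn
open RealInnerProductSpace Asymptotics

variable {m r : ℕ}

lemma gam_pairsym {h : Amb m r} (hs : ∀ i j, h i j = h j i) (i j k l : Fin m) :
    gam h i j k l = gam h k l i j := by
  unfold gam
  rw [hs k i, hs l j, hs k j, hs l i, real_inner_comm (h j k) (h i l)]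

lemma gam_skew {h : Amb m r} (i j k l : Fin m) :
    gam h i j k l = - gam h j i k l := by
  unfold gam
  rw [real_inner_comm (h j k) (h i l), real_inner_comm (h j l) (h i k)]
  ring

lemma gam_bianchi {h : Amb m r} (hs : ∀ i j, h i j = h j i) (i j k l : Fin m) :
    gam h i j k l + gam h k i j l + gam h j k i l = 0 := by
  unfold gam
  rw [hs k j, hs k l, hs j i, hs k i, real_inner_comm (h j k) (h i l),
    real_inner_comm (h i j) (h l k), real_inner_comm (h j l) (h i k)]
  ring

/-- polarization : Dc x v = gam (x+v) - gam x - gam v -/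
lemma Dc_polar (x v : Amb m r) :
    Dc x v = gam (x + v) - gam x - gam v := by
  funext i j k l
  have : (gam (x + v) - gam x - gam v) i j k l = gam (x+v) i j k l - gam x i j k l - gam v i j k l := rfl
  rw [Dc_apply, this]
  unfold gam
  simp only [Pi.add_apply, inner_add_left, inner_add_right]
  ring

lemma codRestrict_strict {X T : Type*} [NormedAddCommGroup X] [NormedSpace ℝ X]
    [NormedAddCommGroup T] [NormedSpace ℝ T]
    (K : Submodule ℝ T) (g : X → T) (g' : X →L[ℝ] T) (x : X)
    (hmem : ∀ y, g y ∈ K) (hmem' : ∀ y, g' y ∈ K)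
    (H : HasStrictFDerivAt g g' x) :
    HasStrictFDerivAt (fun y => (⟨g y, hmem y⟩ : K)) (g'.codRestrict K hmem') x := by
  rw [hasStrictFDerivAt_iff_isLittleO] at H ⊢
  rw [isLittleO_iff] at H ⊢
  intro c hc
  filter_upwards [H hc] with p hp
  simpa using hp

end GaussAn
end

noncomputable section
namespace GaussAn
open RealInnerProductSpace Finset

abbrev QQ (n : ℕ) := {q : Fin n × Fin n // q.1 ≤ q.2}

variable {n r : ℕ}

def Vv (p : QQ n) : Fin (n+1) → ℝ := fun i =>
  (if p.1.1.castSucc = i then (1:ℝ) else 0) + (if p.1.2.castSucc = i then 1 else 0)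

def h0 (ι : QQ n ↪ Fin r) : Amb (n+1) r := fun i j =>
  ∑ p : QQ n, (Vv p i * Vv p j) • EuclideanSpace.single (ι p) (1:ℝ)

lemma h0_symm (ι : QQ n ↪ Fin r) (i j : Fin (n+1)) : h0 ι i j = h0 ι j i := by
  unfold h0
  exact Finset.sum_congr rfl fun p _ => by rw [mul_comm]

lemma inner_single_single (a b : Fin r) :
    ⟪EuclideanSpace.single a (1:ℝ), EuclideanSpace.single b (1:ℝ)⟫
      = if a = b then (1:ℝ) else 0 := by
  rw [EuclideanSpace.inner_single_left]
  simp [EuclideanSpace.single_apply, eq_comm]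

lemma inner_h0 (ι : QQ n ↪ Fin r) (i j k l : Fin (n+1)) :
    ⟪h0 ι i j, h0 ι k l⟫ = ∑ p : QQ n, Vv p i * Vv p j * (Vv p k * Vv p l) := by
  unfold h0
  rw [sum_inner]
  refine Finset.sum_congr rfl fun p _ => ?_
  rw [inner_sum]
  have : ∀ q : QQ n,
      ⟪(Vv p i * Vv p j) • EuclideanSpace.single (ι p) (1:ℝ),
        (Vv q k * Vv q l) • EuclideanSpace.single (ι q) (1:ℝ)⟫
      = if q = p then Vv p i * Vv p j * (Vv p k * Vv p l) else 0 := by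
    intro q
    rw [real_inner_smul_left, real_inner_smul_right, inner_single_single]
    by_cases hq : q = p
    · subst hq; simp
    · have : ι p ≠ ι q := fun hc => hq (ι.injective hc).symm
      simp [this, hq]
  rw [Finset.sum_congr rfl fun q _ => this q, Finset.sum_ite_eq' Finset.univ p]
  simp

lemma gam_h0 (ι : QQ n ↪ Fin r) : gam (h0 ι) = 0 := by
  funext i j k l
  show ⟪h0 ι i k, h0 ι j l⟫ - ⟪h0 ι i l, h0 ι j k⟫ = 0
  rw [inner_h0, inner_h0, ← Finset.sum_sub_distrib]
  apply Finset.sum_eq_zero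
  intro p _
  ring

lemma inner_h0_single (ι : QQ n ↪ Fin r) (i j : Fin (n+1)) (q : QQ n) :
    ⟪h0 ι i j, EuclideanSpace.single (ι q) (1:ℝ)⟫ = Vv q i * Vv q j := by
  unfold h0
  rw [sum_inner]
  have : ∀ p : QQ n,
      ⟪(Vv p i * Vv p j) • EuclideanSpace.single (ι p) (1:ℝ),
        EuclideanSpace.single (ι q) (1:ℝ)⟫
      = if p = q then Vv q i * Vv q j else 0 := by
    intro p
    rw [real_inner_smul_left, inner_single_single]
    by_cases hq : p = q
    · subst hq; simp
    · have : ι p ≠ ι q := fun hc => hq (ι.injective hc)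
      simp [this, hq]
  rw [Finset.sum_congr rfl fun p _ => this p, Finset.sum_ite_eq' Finset.univ q]
  simp

lemma h0_indep (ι : QQ n ↪ Fin r) :
    LinearIndependent ℝ (fun q : QQ n => h0 ι q.1.1.castSucc q.1.2.castSucc) := by
  classical
  rw [Fintype.linearIndependent_iff]
  intro g hg
  have hQeq : ∀ (p : QQ n) (x y : Fin n) (hxy : x ≤ y),
      p = (⟨(x,y),hxy⟩ : QQ n) ↔ (p.1.1 = x ∧ p.1.2 = y) := by
    intro p x y hxy
    constructor
    · rintro rfl; exact ⟨rfl, rfl⟩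
    · rintro ⟨h1, h2⟩
      exact Subtype.ext (Prod.ext h1 h2)
  have hev : ∀ q : QQ n,
      ∑ p : QQ n, g p * (Vv q p.1.1.castSucc * Vv q p.1.2.castSucc) = 0 := by
    intro q
    have h1 := congrArg (fun z => ⟪z, EuclideanSpace.single (ι q) (1:ℝ)⟫) hg
    simp only [sum_inner, real_inner_smul_left, inner_h0_single, inner_zero_left] at h1
    convert h1 using 2 with p
    try ring
  have hV : ∀ (q : QQ n) (a : Fin n), Vv q a.castSucc
      = (if q.1.1 = a then (1:ℝ) else 0) + (if q.1.2 = a then 1 else 0) := by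
    intro q a
    unfold Vv
    congr 1 <;> simp [Fin.castSucc_inj]
  have hdiag : ∀ a : Fin n, g ⟨(a,a), le_refl a⟩ = 0 := by
    intro a
    have h1 := hev ⟨(a,a), le_refl a⟩
    have h2 : ∀ p ∈ Finset.univ, g p * (Vv (⟨(a,a), le_refl a⟩ : QQ n) p.1.1.castSucc
        * Vv (⟨(a,a), le_refl a⟩ : QQ n) p.1.2.castSucc)
        = if p = (⟨(a,a), le_refl a⟩ : QQ n) then 4 * g p else 0 := by
      intro p _
      rw [hV, hV]
      by_cases hp1 : a = p.1.1
      · by_cases hp2 : a = p.1.2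
        · rw [if_pos ((hQeq _ _ _ _).mpr ⟨hp1.symm, hp2.symm⟩)]
          simp [← hp1, ← hp2]
          ring
        · rw [if_neg (fun hc => hp2 (((hQeq _ _ _ _).mp hc).2.symm))]
          rw [if_neg hp2]
          simp
      · rw [if_neg (fun hc => hp1 (((hQeq _ _ _ _).mp hc).1.symm))]
        rw [if_neg hp1]
        simp
    rw [Finset.sum_congr rfl h2, Finset.sum_ite_eq' Finset.univ _ (fun p => 4 * g p)] at h1
    simp at h1
    linarith
  intro p₀
  obtain ⟨⟨a, b⟩, hab⟩ := p₀
  by_cases heq : a = b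
  · subst heq; exact hdiag a
  have hlt : a < b := lt_of_le_of_ne hab heq
  have h1 := hev ⟨(a,b), hab⟩
  set qaa : QQ n := ⟨(a,a), le_refl a⟩ with hqaa
  set qbb : QQ n := ⟨(b,b), le_refl b⟩ with hqbb
  set qab : QQ n := ⟨(a,b), hab⟩ with hqab
  have h2 : ∀ p ∈ Finset.univ, g p * (Vv qab p.1.1.castSucc * Vv qab p.1.2.castSucc)
      = (if p = qaa then g p else 0) + ((if p = qbb then g p else 0)
        + (if p = qab then g p else 0)) := by
    intro p _
    rw [hV, hV]
    have eaa : (p = qaa) ↔ (p.1.1 = a ∧ p.1.2 = a) := hQeq _ _ _ _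
    have ebb : (p = qbb) ↔ (p.1.1 = b ∧ p.1.2 = b) := hQeq _ _ _ _
    have eab : (p = qab) ↔ (p.1.1 = a ∧ p.1.2 = b) := hQeq _ _ _ _
    by_cases c1 : a = p.1.1
    · by_cases c3 : a = p.1.2
      · have hb1 : ¬ (b = p.1.1) := fun hc => heq (c1.trans hc.symm)
        have hb2 : ¬ (b = p.1.2) := fun hc => heq (c3.trans hc.symm)
        have hba : ¬ b = a := fun hc => heq hc.symm
        rw [if_pos (eaa.mpr ⟨c1.symm, c3.symm⟩),
          if_neg (fun hc => hb1 ((ebb.mp hc).1.symm)),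
          if_neg (fun hc => hb2 ((eab.mp hc).2.symm))]
        simp [← c1, ← c3, hba, hqab]
      · by_cases c4 : b = p.1.2
        · rw [if_neg (fun hc => c3 ((eaa.mp hc).2.symm)),
            if_neg (fun hc => heq (c1.trans ((ebb.mp hc).1))),
            if_pos (eab.mpr ⟨c1.symm, c4.symm⟩)]
          have hba : ¬ b = a := fun hc => heq hc.symm
          simp [← c1, ← c4, hba, heq, hqab]
        · rw [if_neg (fun hc => c3 ((eaa.mp hc).2.symm)),
            if_neg (fun hc => c4 ((ebb.mp hc).2.symm)),
            if_neg (fun hc => c4 ((eab.mp hc).2.symm))]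
          simp [c3, c4, hqab]
    · by_cases c2 : b = p.1.1
      · have hc3 : ¬ (a = p.1.2) := by
          intro hc
          have : (p.1.1 : Fin n) ≤ p.1.2 := p.2
          rw [← c2, ← hc] at this
          exact absurd this (not_le.mpr hlt)
        by_cases c4 : b = p.1.2
        · rw [if_neg (fun hc => c1 ((eaa.mp hc).1.symm)),
            if_pos (ebb.mpr ⟨c2.symm, c4.symm⟩),
            if_neg (fun hc => c1 ((eab.mp hc).1.symm))]
          simp [← c2, ← c4, heq, hqab]
        · rw [if_neg (fun hc => c1 ((eaa.mp hc).1.symm)),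
            if_neg (fun hc => c4 ((ebb.mp hc).2.symm)),
            if_neg (fun hc => c1 ((eab.mp hc).1.symm))]
          simp [hc3, c4, hqab]
      · rw [if_neg (fun hc => c1 ((eaa.mp hc).1.symm)),
          if_neg (fun hc => c2 ((ebb.mp hc).1.symm)),
          if_neg (fun hc => c1 ((eab.mp hc).1.symm))]
        simp [c1, c2, hqab]
  rw [Finset.sum_congr rfl h2, Finset.sum_add_distrib, Finset.sum_add_distrib,
    Finset.sum_ite_eq' Finset.univ qaa (fun p => g p),
    Finset.sum_ite_eq' Finset.univ qbb (fun p => g p),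
    Finset.sum_ite_eq' Finset.univ qab (fun p => g p)] at h1
  simp only [Finset.mem_univ, if_true] at h1
  have d1 := hdiag a
  have d2 := hdiag b
  rw [← hqaa] at d1
  rw [← hqbb] at d2
  show g qab = 0
  rw [d1, d2] at h1
  linarith

end GaussAn
end

noncomputable section
namespace GaussAn

lemma exists_emb {n r : ℕ} (hr : (n+1) * n / 2 ≤ r) : Nonempty (QQ n ↪ Fin r) := by
  have h1 : Fintype.card (QQ n) = (n+1) * n / 2 := by
    rw [Fintype.card_congr (Sym2.sortEquiv (α := Fin n)).symm, Sym2.card]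
    simp [Nat.choose_two_right, Nat.mul_comm]
  apply Function.Embedding.nonempty_of_card_le
  rw [h1, Fintype.card_fin]
  exact hr

end GaussAn
end


set_option maxHeartbeats 2000000 in
open GaussAn GaussLA RealInnerProductSpace in
/-- The Gauss map `γ(h)_{ijkl} = ⟨h_{ik}, h_{jl}⟩ - ⟨h_{il}, h_{jk}⟩`, on the open set
`H` of `W`-valued symmetric bilinear forms `h` on `ℝ^m` (`W = ℝ^r`,
`r ≥ m(m-1)/2`) whose components `{h_{ij} : 1 ≤ i ≤ j ≤ m-1}` are linearly independent,
is a surjective submersion onto the space `K_m` of algebraic curvature tensors: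
every `R ∈ K_m` is a value `γ(h)`, and at every such `h` the differential of `γ`
(restricted to the symmetric forms) maps onto `K_m`. -/
theorem gauss_map_surjective_submersion (m r : ℕ) (hr : m * (m - 1) / 2 ≤ r)
    (Sym : Submodule ℝ (Fin m → Fin m → EuclideanSpace ℝ (Fin r)))
    (hSym : ∀ h, h ∈ Sym ↔ ∀ i j, h i j = h j i)
    (K : Submodule ℝ (Fin m → Fin m → Fin m → Fin m → ℝ))
    (hK : ∀ R, R ∈ K ↔
      ((∀ i j k l, R i j k l = R k l i j) ∧
       (∀ i j k l, R i j k l = - R j i k l) ∧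
       (∀ i j k l, R i j k l + R k i j l + R j k i l = 0)))
    (γ : (Fin m → Fin m → EuclideanSpace ℝ (Fin r)) →
      (Fin m → Fin m → Fin m → Fin m → ℝ))
    (hγ : ∀ h i j k l, γ h i j k l =
      (inner ℝ (h i k) (h j l) : ℝ) - (inner ℝ (h i l) (h j k) : ℝ))
    (Indep : (Fin m → Fin m → EuclideanSpace ℝ (Fin r)) → Prop)
    (hIndep : ∀ h, Indep h ↔ LinearIndependent ℝ
      (fun q : {q : Fin (m - 1) × Fin (m - 1) // q.1 ≤ q.2} =>
        h (Fin.castLE (Nat.sub_le m 1) q.1.1) (Fin.castLE (Nat.sub_le m 1) q.1.2))) :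
    (∀ R ∈ K, ∃ h ∈ Sym, Indep h ∧ γ h = R) ∧
    (∀ h ∈ Sym, Indep h →
      ∀ R ∈ K, ∃ v ∈ Sym, fderiv ℝ γ h v = R) := by
  classical
  have hγeq : γ = GaussAn.gam (m := m) (r := r) := by
    funext h i j k l
    rw [hγ]; rfl
  subst hγeq
  cases m with
  | zero =>
    constructor
    · intro R hR
      refine ⟨0, Sym.zero_mem, ?_, ?_⟩
      · rw [hIndep]
        haveI : IsEmpty {q : Fin (0 - 1) × Fin (0 - 1) // q.1 ≤ q.2} :=
          ⟨fun q => Fin.elim0 q.1.1⟩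
        exact linearIndependent_empty_type
      · funext i j k l; exact i.elim0
    · intro h _ _ R hR
      refine ⟨0, Sym.zero_mem, ?_⟩
      funext i j k l; exact i.elim0
  | succ n =>
    -- Part 2 (also used to get surjectivity of the restricted derivative)
    have part2core : ∀ h, (∀ i j, h i j = h j i) → Indep h →
        ∀ R, R ∈ K → ∃ v, (∀ i j, v i j = v j i) ∧ GaussAn.Dc h v = R := by
      intro h hs hind R hRK
      obtain ⟨hR1, hR2, hR3⟩ := (hK R).mp hRK
      have hindep : LinearIndependent ℝ
          (fun q : GaussLA.QQ n => h q.1.1.castSucc q.1.2.castSucc) := (hIndep h).mp hind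
      obtain ⟨v, hvsym, hveq⟩ := GaussLA.mainLA hR1 hR2 hR3 hs hindep
      refine ⟨v, hvsym, ?_⟩
      funext i j k l
      rw [GaussAn.Dc_apply]
      have h1 := hveq i j k l
      have c1 : ⟪v i k, h j l⟫ = ⟪h j l, v i k⟫ := real_inner_comm _ _
      linarith [hveq i j k l]
    have part2 : ∀ h ∈ Sym, Indep h → ∀ R ∈ K, ∃ v ∈ Sym,
        fderiv ℝ (GaussAn.gam (m := n+1) (r := r)) h v = R := by
      intro h hmem hind R hRK
      obtain ⟨v, hvsym, hveq⟩ := part2core h ((hSym h).mp hmem) hind R hRK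
      refine ⟨v, (hSym v).mpr hvsym, ?_⟩
      rw [GaussAn.fderiv_gam]
      exact hveq
    refine ⟨?_, part2⟩
    -- Part 1
    obtain ⟨ι⟩ : Nonempty (GaussAn.QQ n ↪ Fin r) := GaussAn.exists_emb hr
    have h0sym : ∀ i j, GaussAn.h0 ι i j = GaussAn.h0 ι j i := GaussAn.h0_symm ι
    have h0mem : GaussAn.h0 ι ∈ Sym := (hSym _).mpr h0sym
    have h0ind : Indep (GaussAn.h0 ι) := (hIndep _).mpr (GaussAn.h0_indep ι)
    have h0gam : GaussAn.gam (GaussAn.h0 ι) = 0 := GaussAn.gam_h0 ι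
    have memK : ∀ x : (Fin (n+1) → Fin (n+1) → EuclideanSpace ℝ (Fin r)), (∀ i j, x i j = x j i) → GaussAn.gam x ∈ K := by
      intro x hx
      exact (hK _).mpr ⟨fun i j k l => GaussAn.gam_pairsym hx i j k l,
        fun i j k l => GaussAn.gam_skew i j k l,
        fun i j k l => GaussAn.gam_bianchi hx i j k l⟩
    have memKd : ∀ x : (Fin (n+1) → Fin (n+1) → EuclideanSpace ℝ (Fin r)), (∀ i j, x i j = x j i) → ∀ v : ↥Sym, GaussAn.Dc x ↑v ∈ K := by
      intro x hx v
      have hv : ∀ i j, (v : (Fin (n+1) → Fin (n+1) → EuclideanSpace ℝ (Fin r))) i j = (v : (Fin (n+1) → Fin (n+1) → EuclideanSpace ℝ (Fin r))) j i := (hSym _).mp v.2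
      have hxv : ∀ i j, (x + ↑v) i j = (x + ↑v) j i := by
        intro i j; show x i j + (v : (Fin (n+1) → Fin (n+1) → EuclideanSpace ℝ (Fin r))) i j = x j i + (v : (Fin (n+1) → Fin (n+1) → EuclideanSpace ℝ (Fin r))) j i
        rw [hx, hv]
      rw [GaussAn.Dc_polar]
      exact K.sub_mem (K.sub_mem (memK _ hxv) (memK _ hx)) (memK _ hv)
    set h0' : ↥Sym := ⟨GaussAn.h0 ι, h0mem⟩ with hh0'
    set f : ↥Sym → ↥K := fun y =>
      (⟨GaussAn.gam ((y : (Fin (n+1) → Fin (n+1) → EuclideanSpace ℝ (Fin r)))),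
        memK (y : (Fin (n+1) → Fin (n+1) → EuclideanSpace ℝ (Fin r))) ((hSym _).mp y.2)⟩ : ↥K) with hf
    set f' : ↥Sym →L[ℝ] ↥K :=
      ContinuousLinearMap.codRestrict
        ((GaussAn.Dc (GaussAn.h0 ι)).comp Sym.subtypeL) K
        (fun v => memKd _ h0sym v) with hf'
    have Hg : HasStrictFDerivAt (fun y : ↥Sym => GaussAn.gam (↑y : (Fin (n+1) → Fin (n+1) → EuclideanSpace ℝ (Fin r))))
        ((GaussAn.Dc (GaussAn.h0 ι)).comp Sym.subtypeL) h0' :=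
      (GaussAn.hasD (GaussAn.h0 ι)).comp h0' Sym.subtypeL.hasStrictFDerivAt
    have Hf : HasStrictFDerivAt f f' h0' :=
      GaussAn.codRestrict_strict K _ _ h0' _ (fun v => memKd _ h0sym v) Hg
    have hsurj : LinearMap.range (f' : ↥Sym →ₗ[ℝ] ↥K) = ⊤ := by
      rw [LinearMap.range_eq_top]
      rintro ⟨R, hRK⟩
      obtain ⟨v, hvsym, hveq⟩ := part2core (GaussAn.h0 ι) h0sym h0ind R hRK
      refine ⟨⟨v, (hSym v).mpr hvsym⟩, ?_⟩
      apply Subtype.ext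
      rw [hf']
      exact hveq
    have hmap := Hf.map_nhds_eq_of_surj hsurj
    have hf0 : f h0' = 0 := Subtype.ext h0gam
    have hOopen : IsOpen {y : ↥Sym | Indep ↑y} := by
      have hbig : IsOpen {F : GaussAn.QQ n → EuclideanSpace ℝ (Fin r) |
          LinearIndependent ℝ F} := isOpen_setOf_linearIndependent
      have hcont : Continuous (fun y : ↥Sym => fun q : GaussAn.QQ n =>
          (y : (Fin (n+1) → Fin (n+1) → EuclideanSpace ℝ (Fin r))) q.1.1.castSucc q.1.2.castSucc) := by
        apply continuous_pi
        intro q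
        exact (continuous_apply _).comp ((continuous_apply _).comp continuous_subtype_val)
      have : {y : ↥Sym | Indep ↑y} = (fun y : ↥Sym => fun q : GaussAn.QQ n =>
          (y : (Fin (n+1) → Fin (n+1) → EuclideanSpace ℝ (Fin r))) q.1.1.castSucc q.1.2.castSucc) ⁻¹' {F | LinearIndependent ℝ F} := by
        ext y
        simp only [Set.mem_setOf_eq, Set.mem_preimage]
        exact hIndep ↑y
      rw [this]
      exact hbig.preimage hcont
    have hh0O : h0' ∈ {y : ↥Sym | Indep ↑y} := h0ind
    have himg : f '' {y : ↥Sym | Indep ↑y} ∈ nhds (0 : ↥K) := by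
      rw [← hf0, ← hmap]
      exact Filter.image_mem_map (hOopen.mem_nhds hh0O)
    obtain ⟨ε, hε, hball⟩ := Metric.mem_nhds_iff.mp himg
    intro R hRK
    set z : ↥K := ⟨R, hRK⟩ with hz
    set t : ℝ := ε / (2 * (‖z‖ + 1)) with hteq
    have hzpos : (0:ℝ) < ‖z‖ + 1 := by positivity
    have ht : 0 < t := by positivity
    have htz : ‖t • z‖ < ε := by
      have hns : ‖t • z‖ = ‖t‖ * ‖z‖ := norm_smul t z
      rw [hns, Real.norm_of_nonneg ht.le]
      have hb : t * (‖z‖ + 1) = ε / 2 := by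
        rw [hteq]; field_simp
      nlinarith [norm_nonneg z]
    obtain ⟨y, hyO, hy⟩ := hball (mem_ball_zero_iff.mpr htz)
    set s : ℝ := (Real.sqrt t)⁻¹ with hseq
    have hsqrt : (0:ℝ) < Real.sqrt t := Real.sqrt_pos.mpr ht
    have hsne : s ≠ 0 := by positivity
    have hs2 : s^2 * t = 1 := by
      rw [hseq, inv_pow, Real.sq_sqrt ht.le]
      field_simp
    have hyv : GaussAn.gam (↑y : (Fin (n+1) → Fin (n+1) → EuclideanSpace ℝ (Fin r))) = t • R := by
      have h1 := congrArg Subtype.val hy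
      simpa [hz, Submodule.coe_smul] using h1
    refine ⟨s • (↑y : (Fin (n+1) → Fin (n+1) → EuclideanSpace ℝ (Fin r))), Sym.smul_mem s y.2, ?_, ?_⟩
    · rw [hIndep]
      have base : LinearIndependent ℝ (fun q : GaussAn.QQ n =>
          (↑y : (Fin (n+1) → Fin (n+1) → EuclideanSpace ℝ (Fin r))) q.1.1.castSucc q.1.2.castSucc) := (hIndep ↑y).mp hyO
      have hmapped := base.map'
        (s • (LinearMap.id : EuclideanSpace ℝ (Fin r) →ₗ[ℝ] EuclideanSpace ℝ (Fin r)))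
        (by rw [LinearMap.ker_smul _ _ hsne, LinearMap.ker_id])
      exact hmapped
    · funext i j k l
      show ⟪(s • (↑y : (Fin (n+1) → Fin (n+1) → EuclideanSpace ℝ (Fin r)))) i k, (s • (↑y : (Fin (n+1) → Fin (n+1) → EuclideanSpace ℝ (Fin r)))) j l⟫
          - ⟪(s • (↑y : (Fin (n+1) → Fin (n+1) → EuclideanSpace ℝ (Fin r)))) i l, (s • (↑y : (Fin (n+1) → Fin (n+1) → EuclideanSpace ℝ (Fin r)))) j k⟫ = R i j k l
      have happ : ∀ a b : Fin (n+1), (s • (↑y : (Fin (n+1) → Fin (n+1) → EuclideanSpace ℝ (Fin r)))) a b = s • ((↑y : (Fin (n+1) → Fin (n+1) → EuclideanSpace ℝ (Fin r))) a b) := fun a b => rfl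
      rw [happ, happ, happ, happ]
      rw [real_inner_smul_left, real_inner_smul_left, real_inner_smul_right, real_inner_smul_right]
      have hgy : GaussAn.gam (↑y : (Fin (n+1) → Fin (n+1) → EuclideanSpace ℝ (Fin r))) i j k l = t * R i j k l := by
        rw [hyv]; rfl
      have hgam : ⟪(↑y : (Fin (n+1) → Fin (n+1) → EuclideanSpace ℝ (Fin r))) i k, (↑y : (Fin (n+1) → Fin (n+1) → EuclideanSpace ℝ (Fin r))) j l⟫ - ⟪(↑y : (Fin (n+1) → Fin (n+1) → EuclideanSpace ℝ (Fin r))) i l, (↑y : (Fin (n+1) → Fin (n+1) → EuclideanSpace ℝ (Fin r))) j k⟫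
          = t * R i j k l := hgy
      linear_combination (s^2) * hgam + (R i j k l) * hs2
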